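/- Let a monoid V act on an additive commutative monoid H, suppose the path identity holds, and let k ≥ 1 be such that (k+1) • x = k • x for all x : H. Then for every v : V and every additively idempotent e : H (e + e = e): k • (v • e) = v • e + k • (v • 0). -/
import Mathlib

/-- In an aperiodic path algebra, for an additively idempotent `e`:
`ω • (v • e) = v • e + ω • (v • 0)`. -/
theorem omega_smul_of_idempotent {V H : Type*} [Monoid V] [AddCommMonoid H]
    [MulAction V H]
    (path : ∀ (v : V) (g h : H), v • g + v • h = v • (g + h) + v • (0 : H))
    (k : ℕ) (hk : 1 ≤ k) (aper : ∀ x : H, (k + 1) • x = k • x) :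
    ∀ (v : V) (e : H), e + e = e →
      k • (v • e) = v • e + k • (v • (0 : H)) := by
  intro v e he
  have key : ∀ n : ℕ, (n + 1) • (v • e) = v • e + n • (v • (0 : H)) := by
    intro n
    induction n with
    | zero => simp
    | succ n ih =>
      have h2 : v • e + v • e = v • e + v • (0 : H) := by
        have := path v e e
        rwa [he] at this
      calc (n + 2) • (v • e) = v • e + (n + 1) • (v • e) := by
            rw [succ_nsmul, add_comm]
        _ = v • e + (v • e + n • (v • (0 : H))) := by rw [ih]
        _ = (v • e + v • e) + n • (v • (0 : H)) := by rw [add_assoc]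
        _ = (v • e + v • (0 : H)) + n • (v • (0 : H)) := by rw [h2]
        _ = v • e + (n + 1) • (v • (0 : H)) := by
            rw [add_assoc, add_nsmul, one_nsmul, add_comm (n • (v • (0:H)))]
  rw [← aper (v • e), key k]
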